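/- (Proposition 2.3, second part.) Let a, b, c, t, α ∈ ℂ with b² ≠ 4, c ≠ 0, t² = b² − 4, α² = (−b−t)/2 and a = c(b−t)/2. Then α ≠ 0, both α and α⁻¹ are roots of x⁴ + bx² + 1 = 0, and H_F(α,0,1) = 0 and H_F(−α,0,1) = 0, while H_F(α⁻¹,0,1) ≠ 0 and H_F(−α⁻¹,0,1) ≠ 0. That is, exactly the orbit {[α:0:1],[−α:0:1]} consists of flex points of C_{a,b,c} on the line y = 0. -/

import Mathlib

/-- The Kuribayashi quartic `F(x,y,z) = x⁴+y⁴+z⁴+a x²y² + b x²z² + c y²z²`. -/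
noncomputable def F (a b c x y z : ℂ) : ℂ :=
  x ^ 4 + y ^ 4 + z ^ 4 + a * x ^ 2 * y ^ 2 + b * x ^ 2 * z ^ 2 + c * y ^ 2 * z ^ 2

/-- The Hessian determinant of the Kuribayashi quartic: the determinant of the
3×3 matrix of second partial derivatives of `F`. -/
noncomputable def HF (a b c x y z : ℂ) : ℂ :=
  Matrix.det
    !![12 * x ^ 2 + 2 * a * y ^ 2 + 2 * b * z ^ 2, 4 * a * x * y, 4 * b * x * z;
       4 * a * x * y, 12 * y ^ 2 + 2 * a * x ^ 2 + 2 * c * z ^ 2, 4 * c * y * z;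
       4 * b * x * z, 4 * c * y * z, 12 * z ^ 2 + 2 * b * x ^ 2 + 2 * c * y ^ 2]

lemma HF_y0 (a b c x : ℂ) :
    HF a b c x 0 1 = (2 * a * x ^ 2 + 2 * c) *
      (24 * b * x ^ 4 + (144 - 12 * b ^ 2) * x ^ 2 + 24 * b) := by
  simp [HF, Matrix.det_fin_three]
  ring

lemma HF_neg (a b c x : ℂ) : HF a b c (-x) 0 1 = HF a b c x 0 1 := by
  simp [HF, Matrix.det_fin_three]

/-- Proposition 2.3, second part: if `b² ≠ 4`, `c ≠ 0`, `t² = b² − 4`, `α² = (−b−t)/2`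
and `a = c(b−t)/2`, then exactly the orbit `{[α:0:1],[−α:0:1]}` consists of flex
points of `C_{a,b,c}` on the line `y = 0`. -/
theorem flex_orbit_on_y_eq_zero (a b c t α : ℂ) (hb : b ^ 2 ≠ 4) (hc : c ≠ 0)
    (ht : t ^ 2 = b ^ 2 - 4) (hα : α ^ 2 = (-b - t) / 2) (ha : a = c * (b - t) / 2) :
    α ≠ 0 ∧
    α ^ 4 + b * α ^ 2 + 1 = 0 ∧ (α⁻¹) ^ 4 + b * (α⁻¹) ^ 2 + 1 = 0 ∧
    HF a b c α 0 1 = 0 ∧ HF a b c (-α) 0 1 = 0 ∧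
    HF a b c α⁻¹ 0 1 ≠ 0 ∧ HF a b c (-α⁻¹) 0 1 ≠ 0 := by
  have hα0 : α ≠ 0 := by
    rintro rfl
    have h4 : (4 : ℂ) = 0 := by linear_combination 2 * (b - t) * hα + ht
    norm_num at h4
  have hroot : α ^ 4 + b * α ^ 2 + 1 = 0 := by
    linear_combination (α ^ 2 + (b - t) / 2) * hα + (1 / 4) * ht
  have hinv : (α⁻¹) ^ 4 + b * (α⁻¹) ^ 2 + 1 = 0 := by
    field_simp
    linear_combination hroot
  have f1 : 2 * a * α ^ 2 + 2 * c = 0 := by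
    rw [ha]; linear_combination c * (b - t) * hα + (c / 2) * ht
  have hHFα : HF a b c α 0 1 = 0 := by
    rw [HF_y0, f1, zero_mul]
  -- inverse square
  have h1 : α ^ 2 * ((-b + t) / 2) = 1 := by
    linear_combination ((-b + t) / 2) * hα - (1 / 4) * ht
  have hu2 : (α⁻¹) ^ 2 = (-b + t) / 2 := by
    rw [inv_pow]
    exact inv_eq_of_mul_eq_one_right h1
  have heq : HF a b c α⁻¹ 0 1 =
      36 * c * (4 - b ^ 2 + b * t) * (4 - b ^ 2) * (α⁻¹) ^ 2 := by
    rw [HF_y0, ha, show (α⁻¹) ^ 4 = ((α⁻¹) ^ 2) ^ 2 by ring, hu2]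
    linear_combination (c * (-3 * b * t ^ 2 - 12 * b ^ 3 + 15 * b ^ 2 * t + 48 * b - 36 * t)) * ht
  have hS : 4 - b ^ 2 + b * t ≠ 0 := by
    intro h
    have htne : t ≠ 0 := by
      rintro rfl
      exact hb (by linear_combination -ht)
    have h2 : t * (b - t) = 0 := by linear_combination h - ht
    rcases mul_eq_zero.mp h2 with h3 | h3
    · exact htne h3
    · have h4 : (4 : ℂ) = 0 := by linear_combination (b + t) * h3 + ht
      norm_num at h4
  have h4b : (4 : ℂ) - b ^ 2 ≠ 0 := fun h => hb (by linear_combination -h)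
  have hune : HF a b c α⁻¹ 0 1 ≠ 0 := by
    rw [heq]
    exact mul_ne_zero (mul_ne_zero (mul_ne_zero (mul_ne_zero (by norm_num) hc) hS) h4b)
      (pow_ne_zero 2 (inv_ne_zero hα0))
  refine ⟨hα0, hroot, hinv, hHFα, ?_, hune, ?_⟩
  · rw [HF_neg]; exact hHFα
  · rw [HF_neg]; exact hune
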